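/- Let 𝒬 be a Hytönen–Kairema dyadic system on a space of homogeneous type (X,d,μ) with parameter δ. For k ∈ ℤ and Q ∈ 𝒬_k, define Q* := ⋃{P ∈ 𝒬_k : P ∩ ⋃_{y∈Q} B(y, δ^{k−2}) ≠ ∅}. Then (a) for every x ∈ Q, B(x, δ^{k−2}) ⊂ Q*, and (b) there is a uniform constant C (independent of x, k, Q) such that μ(Q*) ≤ C μ(B(x, δ^{k−2})) for every x ∈ Q. -/

import Mathlib

open MeasureTheory
open scoped ENNReal

/-- For a Hytönen–Kairema dyadic system on a space of homogeneous
type and `Q ∈ 𝒬_k`, set `Q* := ⋃ {P ∈ 𝒬_k : P ∩ ⋃_{y∈Q} B(y,δ^{k-2}) ≠ ∅}`.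
Then (a) `B(x,δ^{k-2}) ⊆ Q*` for every `x ∈ Q`, and (b) there is a uniform constant
`C` with `μ(Q*) ≤ C μ(B(x,δ^{k-2}))` for every `x ∈ Q`. -/
theorem dyadic_star_properties {X : Type*} [MeasurableSpace X] {ι : Type*}
    (d : X → X → ℝ) (A₀ : ℝ) (hA₀ : 1 ≤ A₀)
    (hd_nonneg : ∀ x y, 0 ≤ d x y)
    (hd_eq : ∀ x y, d x y = 0 ↔ x = y)
    (hd_symm : ∀ x y, d x y = d y x)
    (hd_tri : ∀ x y z, d x y ≤ A₀ * (d x z + d z y))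
    (μ : Measure X)
    (hball : ∀ (x : X) (r : ℝ), 0 < r → 0 < μ {y | d y x < r} ∧ μ {y | d y x < r} < ⊤)
    (Cμ : ℝ≥0∞) (hCμ : 1 ≤ Cμ) (hCμfin : Cμ < ⊤)
    (hdoub : ∀ (x : X) (r : ℝ), 0 < r → μ {y | d y x < 2 * r} ≤ Cμ * μ {y | d y x < r})
    (δ c₀ C₀ : ℝ) (hδ0 : 0 < δ) (hδ1 : δ < 1) (hc₀ : 0 < c₀) (hc₀C₀ : c₀ ≤ C₀)
    (hgeom : 12 * A₀ ^ 3 * C₀ * δ ≤ c₀)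
    (cube : ℤ → ι → Set X) (z : ℤ → ι → X)
    (hcover : ∀ k : ℤ, (⋃ α, cube k α) = Set.univ)
    (hdisj : ∀ k : ℤ, Pairwise fun α β => Disjoint (cube k α) (cube k β))
    (hsandwich : ∀ (k : ℤ) (α : ι),
      {y | d y (z k α) < (3 * A₀ ^ 2)⁻¹ * c₀ * δ ^ k} ⊆ cube k α ∧
        cube k α ⊆ {y | d y (z k α) < 2 * A₀ * C₀ * δ ^ k}) :
    (∀ (k : ℤ) (α : ι) (x : X), x ∈ cube k α →
      {w | d w x < δ ^ (k - 2)} ⊆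
        {w | ∃ β, w ∈ cube k β ∧ ∃ u ∈ cube k β, ∃ y ∈ cube k α, d u y < δ ^ (k - 2)}) ∧
    ∃ C : ℝ≥0∞, C ≠ ⊤ ∧ ∀ (k : ℤ) (α : ι) (x : X), x ∈ cube k α →
      μ {w | ∃ β, w ∈ cube k β ∧ ∃ u ∈ cube k β, ∃ y ∈ cube k α, d u y < δ ^ (k - 2)} ≤
        C * μ {w | d w x < δ ^ (k - 2)} := by

  constructor
  · intro k α x hx w hw
    have : w ∈ ⋃ β, cube k β := by rw [hcover k]; trivial
    obtain ⟨β, hβ⟩ := Set.mem_iUnion.mp this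
    exact ⟨β, hβ, w, hβ, x, hx, hw⟩
  · -- iterated doubling
    have hiter : ∀ (n : ℕ) (x : X) (r : ℝ), 0 < r →
        μ {y | d y x < 2 ^ n * r} ≤ Cμ ^ n * μ {y | d y x < r} := by
      intro n
      induction n with
      | zero => intro x r hr; simp
      | succ n ih =>
        intro x r hr
        have h2 : (2:ℝ) ^ (n+1) * r = 2 * (2 ^ n * r) := by ring
        rw [h2]
        calc μ {y | d y x < 2 * (2 ^ n * r)}
            ≤ Cμ * μ {y | d y x < 2 ^ n * r} :=
              hdoub x _ (by positivity)
          _ ≤ Cμ * (Cμ ^ n * μ {y | d y x < r}) := by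
              gcongr
              exact ih x r hr
          _ = Cμ ^ (n+1) * μ {y | d y x < r} := by ring
    set M : ℝ := 4 * A₀ ^ 3 * C₀ + A₀ ^ 2 + 4 * A₀ ^ 4 * C₀ with hM
    obtain ⟨n, hn⟩ := pow_unbounded_of_one_lt M (one_lt_two (α := ℝ))
    refine ⟨Cμ ^ n, ENNReal.pow_ne_top hCμfin.ne, ?_⟩
    intro k α x hx
    have hδk2 : (0:ℝ) < δ ^ (k - 2) := zpow_pos hδ0 _
    have hδkk : δ ^ k ≤ δ ^ (k - 2) :=
      zpow_le_zpow_right_of_le_one₀ hδ0 hδ1.le (by omega)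
    have hA0 : (0:ℝ) < A₀ := lt_of_lt_of_le one_pos hA₀
    have hC0 : (0:ℝ) < C₀ := lt_of_lt_of_le hc₀ hc₀C₀
    -- Q* is contained in the ball of radius 2^n * δ^(k-2)
    have hsub : {w | ∃ β, w ∈ cube k β ∧ ∃ u ∈ cube k β, ∃ y ∈ cube k α, d u y < δ ^ (k - 2)}
        ⊆ {w | d w x < 2 ^ n * δ ^ (k - 2)} := by
      rintro w ⟨β, hwβ, u, huβ, y, hyα, huy⟩
      have hzβ := (hsandwich k β).2
      have hzα := (hsandwich k α).2
      have hwz : d w (z k β) < 2 * A₀ * C₀ * δ ^ k := hzβ hwβ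
      have huz : d u (z k β) < 2 * A₀ * C₀ * δ ^ k := hzβ huβ
      have hyz : d y (z k α) < 2 * A₀ * C₀ * δ ^ k := hzα hyα
      have hxz : d x (z k α) < 2 * A₀ * C₀ * δ ^ k := hzα hx
      have hwu : d w u ≤ A₀ * (d w (z k β) + d u (z k β)) := by
        have := hd_tri w u (z k β)
        rwa [hd_symm (z k β) u] at this
      have hyx : d y x ≤ A₀ * (d y (z k α) + d x (z k α)) := by
        have := hd_tri y x (z k α)
        rwa [hd_symm (z k α) x] at this
      have hwu' : d w u < 4 * A₀ ^ 2 * C₀ * δ ^ k := by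
        calc d w u ≤ A₀ * (d w (z k β) + d u (z k β)) := hwu
          _ < A₀ * (2 * A₀ * C₀ * δ ^ k + 2 * A₀ * C₀ * δ ^ k) := by
              apply mul_lt_mul_of_pos_left (add_lt_add hwz huz) hA0
          _ = 4 * A₀ ^ 2 * C₀ * δ ^ k := by ring
      have hyx' : d y x < 4 * A₀ ^ 2 * C₀ * δ ^ k := by
        calc d y x ≤ A₀ * (d y (z k α) + d x (z k α)) := hyx
          _ < A₀ * (2 * A₀ * C₀ * δ ^ k + 2 * A₀ * C₀ * δ ^ k) := by
              apply mul_lt_mul_of_pos_left (add_lt_add hyz hxz) hA0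
          _ = 4 * A₀ ^ 2 * C₀ * δ ^ k := by ring
      have hwx : d w x ≤ A₀ * (d w u + d u x) := hd_tri w x u
      have key : d w x < M * δ ^ (k - 2) := by
        have h1 : d u x ≤ A₀ * (d u y + d y x) := hd_tri u x y
        have h2 : d w x ≤ A₀ * (d w u + A₀ * (d u y + d y x)) := by
          calc d w x ≤ A₀ * (d w u + d u x) := hd_tri w x u
            _ ≤ A₀ * (d w u + A₀ * (d u y + d y x)) := by
                apply mul_le_mul_of_nonneg_left _ hA0.le
                exact add_le_add le_rfl h1
        have hbound : A₀ * (d w u + A₀ * (d u y + d y x)) <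
            A₀ * (4 * A₀ ^ 2 * C₀ * δ ^ (k-2) + A₀ * (δ ^ (k-2) + 4 * A₀ ^ 2 * C₀ * δ ^ (k-2))) := by
          apply mul_lt_mul_of_pos_left _ hA0
          have hwu'' : d w u < 4 * A₀ ^ 2 * C₀ * δ ^ (k-2) := by
            apply hwu'.trans_le
            apply mul_le_mul_of_nonneg_left hδkk (by positivity)
          have hyx'' : d y x < 4 * A₀ ^ 2 * C₀ * δ ^ (k-2) := by
            apply hyx'.trans_le
            apply mul_le_mul_of_nonneg_left hδkk (by positivity)
          apply add_lt_add hwu''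
          apply mul_lt_mul_of_pos_left (add_lt_add huy hyx'') hA0
        have : A₀ * (4 * A₀ ^ 2 * C₀ * δ ^ (k-2) + A₀ * (δ ^ (k-2) + 4 * A₀ ^ 2 * C₀ * δ ^ (k-2)))
            = M * δ ^ (k-2) := by rw [hM]; ring
        linarith [h2.trans_lt hbound]
      have : M * δ ^ (k - 2) ≤ 2 ^ n * δ ^ (k - 2) :=
        mul_le_mul_of_nonneg_right hn.le hδk2.le
      exact lt_of_lt_of_le key this
    calc μ {w | ∃ β, w ∈ cube k β ∧ ∃ u ∈ cube k β, ∃ y ∈ cube k α, d u y < δ ^ (k - 2)}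
        ≤ μ {w | d w x < 2 ^ n * δ ^ (k - 2)} := measure_mono hsub
      _ ≤ Cμ ^ n * μ {w | d w x < δ ^ (k - 2)} := hiter n x _ hδk2
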